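/- arXiv:2402.17473 — 7 statements merged into one kernel-verified Lean document; each statement's English description precedes it below -/
import Mathlib

section
/- Let X ⊆ S. Then the maximum size of a partial transversal of the set system (A(e), e ∈ E) that is contained in X equals the maximum height of a labeling of G with respect to the α-vector α(X). (This is the identification r = r_𝒜 in Theorem 1(a): the rank function of the matroid M = (S, r) is the rank function of the transversal matroid M[𝒜].) -/
open Finset

variable {V E : Type*}

/-- Degree of a vertex in the multigraph given by `ends : E → Sym2 V`
(a loop contributes 2). -/
def mdeg [Fintype E] [DecidableEq V] (ends : E → Sym2 V) (v : V) : ℕ :=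
  ∑ e : E, (if ends e = Sym2.mk v v then 2 else if v ∈ ends e then 1 else 0)

/-- The ground set `S = {(v,i) : 1 ≤ i ≤ deg v}`. -/
def mS [Fintype V] [Fintype E] [DecidableEq V] (ends : E → Sym2 V) : Finset (V × ℕ) :=
  Finset.univ.biUnion fun v => (Finset.Icc 1 (mdeg ends v)).image fun i => (v, i)

/-- `A(e) = {(x,i) ∈ S : x is an endpoint of e}`. -/
def mA [Fintype V] [Fintype E] [DecidableEq V] (ends : E → Sym2 V) (e : E) :
    Finset (V × ℕ) :=
  (mS ends).filter fun p => p.1 ∈ ends e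

/-- `B` is a partial transversal of the set system `(A(e), e ∈ F)`. -/
def IsPT [Fintype V] [Fintype E] [DecidableEq V] (ends : E → Sym2 V) (F : Finset E)
    (B : Finset (V × ℕ)) : Prop :=
  ∃ f : V × ℕ → E, Set.InjOn f ↑B ∧ ∀ b ∈ B, f b ∈ F ∧ b ∈ mA ends (f b)

/-- A labeling of the graph with respect to a vector `α : V → ℕ`. -/
def IsLabeling [Fintype E] [DecidableEq V] (ends : E → Sym2 V) (α : V → ℕ)
    (φ : E → Option V) : Prop :=
  (∀ e v, φ e = some v → v ∈ ends e) ∧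
    ∀ v, (Finset.univ.filter fun e => φ e = some v).card ≤ α v

/-- The height of a labeling. -/
def height [Fintype E] [DecidableEq V] (φ : E → Option V) : ℕ :=
  (Finset.univ.filter fun e => φ e ≠ none).card

/-- `alphaVec X v = m_X(v)`, the α-vector of `X`. -/
def alphaVec [DecidableEq V] (X : Finset (V × ℕ)) (v : V) : ℕ :=
  (X.filter fun p => p.1 = v).card

theorem pt_to_labeling [Fintype V] [Fintype E] [DecidableEq V] (ends : E → Sym2 V)
    (X : Finset (V × ℕ)) {B : Finset (V × ℕ)} (hBX : B ⊆ X)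
    (hPT : IsPT ends Finset.univ B) :
    ∃ φ : E → Option V, IsLabeling ends (alphaVec X) φ ∧ height φ = B.card := by
  classical
  obtain ⟨f, hinj, hf⟩ := hPT
  set φ : E → Option V := fun e => if h : ∃ b ∈ B, f b = e then some h.choose.1 else none
    with hφdef
  have hφe : ∀ e, φ e = if h : ∃ b ∈ B, f b = e then some h.choose.1 else none :=
    fun e => rfl
  refine ⟨φ, ⟨?_, ?_⟩, ?_⟩
  · intro e v hv
    rw [hφe] at hv
    by_cases h : ∃ b ∈ B, f b = e
    · rw [dif_pos h] at hv
      obtain ⟨hb, hfb⟩ := h.choose_spec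
      have hmA := (hf h.choose hb).2
      rw [hfb] at hmA
      have h2 := (Finset.mem_filter.mp hmA).2
      rw [Option.some.injEq] at hv
      rw [← hv]; exact h2
    · rw [dif_neg h] at hv; exact absurd hv (by simp)
  · intro v
    have key : ∀ e ∈ (Finset.univ.filter fun e => φ e = some v),
        ∃ b ∈ B, f b = e := by
      intro e he
      have h2 := (Finset.mem_filter.mp he).2
      rw [hφe] at h2
      by_contra h
      simp only [dif_neg h] at h2
      exact absurd h2 (by simp)
    rw [alphaVec]
    apply Finset.card_le_card_of_injOn
      (fun e => if h : ∃ b ∈ B, f b = e then h.choose else (v, 0))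
    · intro e he
      have h := key e he
      have hv := (Finset.mem_filter.mp he).2
      rw [hφe] at hv
      simp only [dif_pos h] at hv ⊢
      obtain ⟨hb, hfb⟩ := h.choose_spec
      refine Finset.mem_filter.mpr ⟨hBX hb, ?_⟩
      rwa [Option.some.injEq] at hv
    · intro e he e' he' heq
      have h := key e he
      have h' := key e' he'
      simp only [dif_pos h, dif_pos h'] at heq
      have := h.choose_spec.2
      have := h'.choose_spec.2
      rw [← h.choose_spec.2, ← h'.choose_spec.2, heq]
  · rw [height]
    have : (Finset.univ.filter fun e => φ e ≠ none) = B.image f := by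
      ext e
      simp only [Finset.mem_filter, Finset.mem_univ, true_and, Finset.mem_image, hφe]
      constructor
      · intro he
        by_contra h
        have h' : ¬ ∃ b ∈ B, f b = e := by
          rintro ⟨b, hb, rfl⟩; exact h ⟨b, hb, rfl⟩
        simp only [dif_neg h'] at he
        exact he rfl
      · rintro ⟨b, hb, rfl⟩
        have h : ∃ b' ∈ B, f b' = f b := ⟨b, hb, rfl⟩
        simp only [dif_pos h]
        exact Option.some_ne_none _
    rw [this, Finset.card_image_of_injOn hinj]

theorem labeling_to_pt [Fintype V] [Fintype E] [DecidableEq V] (ends : E → Sym2 V)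
    (X : Finset (V × ℕ)) (hX : X ⊆ mS ends) (hE : Nonempty E)
    {φ : E → Option V} (hLab : IsLabeling ends (alphaVec X) φ) :
    ∃ B ⊆ X, IsPT ends Finset.univ B ∧ B.card = height φ := by
  classical
  obtain ⟨hmem, hcard⟩ := hLab
  set D := Finset.univ.filter (fun e => φ e ≠ none) with hD
  have key : ∀ e : {e // e ∈ D}, ∃ v, φ e.1 = some v := by
    intro e
    have := (Finset.mem_filter.mp e.2).2
    exact Option.ne_none_iff_exists'.mp this
  set vf : {e // e ∈ D} → V := fun e => (key e).choose with hvfdef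
  have hvf : ∀ e, φ e.1 = some (vf e) := fun e => (key e).choose_spec
  set Ev : V → Finset E := fun v => Finset.univ.filter (fun e => φ e = some v) with hEv
  set Xv : V → Finset (V × ℕ) := fun v => X.filter (fun p => p.1 = v) with hXv
  have hEv' : ∀ (v : V) (e : E), e ∈ Ev v ↔ φ e = some v := by
    intro v e; rw [hEv]; simp
  have hXv' : ∀ (v : V) (p : V × ℕ), p ∈ Xv v ↔ p ∈ X ∧ p.1 = v := by
    intro v p; rw [hXv]; exact Finset.mem_filter
  have hle : ∀ v, (Ev v).card ≤ (Xv v).card := fun v => hcard v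
  set emb : ∀ v, {e // e ∈ Ev v} ↪ {p // p ∈ Xv v} := fun v =>
    (Ev v).equivFin.toEmbedding.trans ((Fin.castLEEmb (hle v)).trans
      (Xv v).equivFin.symm.toEmbedding) with hemb
  have hmemEv : ∀ e : {e // e ∈ D}, e.1 ∈ Ev (vf e) := fun e => (hEv' _ _).mpr (hvf e)
  set g : {e // e ∈ D} → V × ℕ := fun e => (emb (vf e) ⟨e.1, hmemEv e⟩ : V × ℕ) with hg
  have hgX : ∀ e, g e ∈ Xv (vf e) := fun e => (emb (vf e) ⟨e.1, hmemEv e⟩).2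
  have hg1 : ∀ e, (g e).1 = vf e := fun e => ((hXv' _ _).mp (hgX e)).2
  have hgXmem : ∀ e, g e ∈ X := fun e => ((hXv' _ _).mp (hgX e)).1
  have congr_emb : ∀ v v' (h : v = v') (x : E) (hx : x ∈ Ev v) (hx' : x ∈ Ev v'),
      (emb v ⟨x, hx⟩ : V × ℕ) = (emb v' ⟨x, hx'⟩ : V × ℕ) := by
    rintro v v' rfl x hx hx'; rfl
  have ginj : Function.Injective g := by
    intro e e' h
    have hv : vf e' = vf e := by rw [← hg1 e, ← hg1 e', h]
    have hmem' : e'.1 ∈ Ev (vf e) := (hEv' _ _).mpr (by rw [hvf e', hv])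
    have h2 : (emb (vf e) ⟨e.1, hmemEv e⟩ : V × ℕ) = (emb (vf e) ⟨e'.1, hmem'⟩ : V × ℕ) := by
      have hge : g e = (emb (vf e) ⟨e.1, hmemEv e⟩ : V × ℕ) := rfl
      have hge' : g e' = (emb (vf e') ⟨e'.1, hmemEv e'⟩ : V × ℕ) := rfl
      rw [hge, hge'] at h
      exact h.trans (congr_emb (vf e') (vf e) hv e'.1 (hmemEv e') hmem')
    have h3 := (emb (vf e)).injective (Subtype.coe_injective h2)
    exact Subtype.ext (Subtype.mk_eq_mk.mp h3)
  refine ⟨D.attach.image g, ?_, ?_, ?_⟩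
  · intro b hb
    obtain ⟨e, _, rfl⟩ := Finset.mem_image.mp hb
    exact hgXmem e
  · haveI := hE
    refine ⟨fun b => if h : ∃ e : {e // e ∈ D}, g e = b then h.choose.1 else Classical.arbitrary E,
      ?_, ?_⟩
    · intro b hb b' hb' hfe
      simp only [Finset.coe_image, Set.mem_image, Finset.mem_coe] at hb hb'
      obtain ⟨e, _, rfl⟩ := hb
      obtain ⟨e', _, rfl⟩ := hb'
      have h : ∃ x : {e // e ∈ D}, g x = g e := ⟨e, rfl⟩
      have h' : ∃ x : {e // e ∈ D}, g x = g e' := ⟨e', rfl⟩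
      simp only [dif_pos h, dif_pos h'] at hfe
      rw [← h.choose_spec, ← h'.choose_spec]
      congr 1
      exact Subtype.ext hfe
    · intro b hb
      obtain ⟨e, _, rfl⟩ := Finset.mem_image.mp hb
      have h : ∃ x : {e // e ∈ D}, g x = g e := ⟨e, rfl⟩
      simp only [dif_pos h]
      refine ⟨Finset.mem_univ _, ?_⟩
      have hc := h.choose_spec
      have hφ : φ h.choose.1 = some (vf h.choose) := hvf h.choose
      rw [← hg1 h.choose, hc] at hφ
      refine Finset.mem_filter.mpr ⟨hX (hgXmem e), ?_⟩
      exact hmem _ _ hφ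
  · rw [Finset.card_image_of_injOn (ginj.injOn), Finset.card_attach]
    rfl

/-- the max size of a partial transversal of `(A(e), e ∈ E)` contained in `X`
equals the max height of a labeling of `G` with respect to `α(X)`. -/
theorem stmt0 [Fintype V] [Fintype E] [DecidableEq V] (ends : E → Sym2 V)
    (X : Finset (V × ℕ)) (hX : X ⊆ mS ends) :
    sSup {k : ℕ | ∃ B ⊆ X, IsPT ends Finset.univ B ∧ B.card = k} =
      sSup {m : ℕ | ∃ φ : E → Option V, IsLabeling ends (alphaVec X) φ ∧ height φ = m} := by
  classical
  have bdd1 : BddAbove {k : ℕ | ∃ B ⊆ X, IsPT ends Finset.univ B ∧ B.card = k} := by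
    refine ⟨X.card, ?_⟩
    rintro k ⟨B, hBX, _, rfl⟩
    exact Finset.card_le_card hBX
  have bdd2 : BddAbove {m : ℕ |
      ∃ φ : E → Option V, IsLabeling ends (alphaVec X) φ ∧ height φ = m} := by
    refine ⟨Fintype.card E, ?_⟩
    rintro m ⟨φ, _, rfl⟩
    rw [height, ← Finset.card_univ]
    exact Finset.card_filter_le _ _
  have h0 : (0 : ℕ) ∈ {m : ℕ |
      ∃ φ : E → Option V, IsLabeling ends (alphaVec X) φ ∧ height φ = m} := by
    refine ⟨fun _ => none, ⟨fun e v h => by simp at h, fun v => by simp⟩, ?_⟩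
    simp [height]
  apply le_antisymm
  · rcases Set.eq_empty_or_nonempty
      {k : ℕ | ∃ B ⊆ X, IsPT ends Finset.univ B ∧ B.card = k} with h | h
    · rw [h, csSup_empty]
      exact bot_le
    · apply csSup_le h
      rintro k ⟨B, hBX, hPT, rfl⟩
      obtain ⟨φ, hφ, hh⟩ := pt_to_labeling ends X hBX hPT
      exact le_csSup bdd2 ⟨φ, hφ, hh⟩
  · apply csSup_le ⟨0, h0⟩
    rintro m ⟨φ, hφ, rfl⟩
    rcases Nat.eq_zero_or_pos (height φ) with hz | hpos
    · rw [hz]; exact Nat.zero_le _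
    · have hE : Nonempty E := by
        rw [height] at hpos
        obtain ⟨e, -⟩ := Finset.card_pos.mp hpos
        exact ⟨e⟩
      obtain ⟨B, hBX, hPT, hcard⟩ := labeling_to_pt ends X hX hE hφ
      exact le_csSup bdd1 ⟨B, hBX, hPT, hcard⟩
end

section
/- Let X ⊆ S and let B ⊆ X be a partial transversal of the set system (A(e), e ∈ E) of size k. Then there exists a labeling of G with respect to α(X) of height k. (Intermediate claim in the proof of Theorem 1(a): from a partial transversal of size k contained in X one obtains a labeling of height k.) -/
open Finset

variable {V E : Type*}

/-- from a partial transversal of `(A(e), e ∈ E)` of size `k` contained in `X`,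
one obtains a labeling of `G` with respect to `α(X)` of height `k`. -/
theorem stmt2 [Fintype V] [Fintype E] [DecidableEq V] (ends : E → Sym2 V)
    (X : Finset (V × ℕ)) (hX : X ⊆ mS ends) (B : Finset (V × ℕ)) (hB : B ⊆ X)
    (hPT : IsPT ends Finset.univ B) (k : ℕ) (hk : B.card = k) :
    ∃ φ : E → Option V, IsLabeling ends (alphaVec X) φ ∧ height φ = k := by
  classical
  obtain ⟨f, hinj, hf⟩ := hPT
  set P : E → Prop := fun e => ∃ b, b ∈ B ∧ f b = e with hP
  set φ : E → Option V := fun e => if h : P e then some h.choose.1 else none with hφ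
  have key : ∀ e, ∀ h : P e, h.choose ∈ B ∧ f h.choose = e := fun e h => h.choose_spec
  -- for each e with φ e ≠ none, a canonical b
  have hsome : ∀ e v, φ e = some v → ∃ b ∈ B, f b = e ∧ b.1 = v := by
    intro e v he
    simp only [hφ] at he
    split_ifs at he with h
    · exact ⟨h.choose, (key e h).1, (key e h).2, Option.some.inj he⟩
  refine ⟨φ, ⟨?_, ?_⟩, ?_⟩
  · intro e v he
    obtain ⟨b, hbB, hfb, hbv⟩ := hsome e v he
    have := (hf b hbB).2
    simp only [mA, Finset.mem_filter] at this
    rw [← hbv, ← hfb]; exact this.2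
  · intro v
    set g : E → V × ℕ := fun e => if h : P e then h.choose else (v, 0) with hg
    apply Finset.card_le_card_of_injOn g
    · intro e he
      simp only [Finset.mem_coe, Finset.mem_filter, Finset.mem_univ, true_and] at he
      obtain ⟨b, hbB, hfb, hbv⟩ := hsome e v he
      have hPe : P e := ⟨b, hbB, hfb⟩
      simp only [hg, dif_pos hPe, Finset.mem_coe, Finset.mem_filter]
      have h1 := (key e hPe).1
      have h2 := (key e hPe).2
      have : hPe.choose = b := hinj h1 hbB (h2.trans hfb.symm)
      exact ⟨hB (this ▸ h1), by rw [this, hbv]⟩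
    · intro e1 he1 e2 he2 hgeq
      simp only [Finset.mem_coe, Finset.mem_filter, Finset.mem_univ, true_and] at he1 he2
      obtain ⟨b1, hb1, hfb1, _⟩ := hsome e1 v he1
      obtain ⟨b2, hb2, hfb2, _⟩ := hsome e2 v he2
      have hP1 : P e1 := ⟨b1, hb1, hfb1⟩
      have hP2 : P e2 := ⟨b2, hb2, hfb2⟩
      simp only [hg, dif_pos hP1, dif_pos hP2] at hgeq
      rw [← (key e1 hP1).2, ← (key e2 hP2).2, hgeq]
  · rw [← hk, height]
    have heq : (Finset.univ.filter fun e => φ e ≠ none) = B.image f := by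
      ext e
      simp only [Finset.mem_filter, Finset.mem_univ, true_and, Finset.mem_image]
      constructor
      · intro he
        by_cases h : P e
        · exact ⟨h.choose, (key e h).1, (key e h).2⟩
        · simp only [hφ, dif_neg h] at he; exact absurd rfl he
      · rintro ⟨b, hbB, rfl⟩
        have hPe : P (f b) := ⟨b, hbB, rfl⟩
        simp [hφ, dif_pos hPe]
    rw [heq, Finset.card_image_of_injOn hinj]
end

section
/- There exists an injection f : E → S with f(e) ∈ A(e) for every edge e ∈ E; equivalently, the transversal matroid M[𝒜] on ground set S with presentation 𝒜 = (A(e), e ∈ E) has rank |E|. (Theorem 1(a): the matroid TM(G) has rank |E|; such an injection is obtained from any orientation of G by sending each edge to an unused copy of its tail.) -/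
open Finset

variable {V E : Type*}

/-- there is an injection `f : E → S` with `f e ∈ A(e)` for all `e`,
i.e. the transversal matroid `TM(G)` has rank `|E|`. -/
theorem stmt3 [Fintype V] [Fintype E] [DecidableEq V] (ends : E → Sym2 V) :
    ∃ f : E → V × ℕ, Function.Injective f ∧ ∀ e : E, f e ∈ mA ends e := by
  classical
  set idx : E → ℕ := fun e => (Fintype.equivFin E e : ℕ) with hidxdef
  set tl : E → V := fun e => (ends e).out.1 with htldef
  have htl : ∀ e, tl e ∈ ends e := fun e => Sym2.out_fst_mem (ends e)
  set f : E → V × ℕ := fun e =>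
    (tl e, (univ.filter fun e' => tl e' = tl e ∧ idx e' < idx e).card + 1) with hfdef
  have key : ∀ a b : E, tl a = tl b → idx a < idx b →
      (univ.filter fun e' => tl e' = tl a ∧ idx e' < idx a).card
        < (univ.filter fun e' => tl e' = tl b ∧ idx e' < idx b).card := by
    intro a b ht hlt
    apply Finset.card_lt_card
    constructor
    · intro x hx
      simp only [mem_filter, mem_univ, true_and] at hx ⊢
      exact ⟨hx.1.trans ht, hx.2.trans hlt⟩
    · intro hsub
      have ha : a ∈ univ.filter fun e' => tl e' = tl b ∧ idx e' < idx b := by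
        simp [ht, hlt]
      have := hsub ha
      simp at this
  have hcard : ∀ e : E,
      (univ.filter fun e' => tl e' = tl e ∧ idx e' < idx e).card + 1 ≤ mdeg ends (tl e) := by
    intro e
    have h1 : (univ.filter fun e' => tl e' = tl e ∧ idx e' < idx e).card + 1
        ≤ (univ.filter fun e' => tl e' = tl e).card := by
      have hsub : insert e (univ.filter fun e' => tl e' = tl e ∧ idx e' < idx e)
          ⊆ univ.filter fun e' => tl e' = tl e := by
        intro x hx
        rcases Finset.mem_insert.mp hx with h | h
        · simp [h]
        · simp only [mem_filter, mem_univ, true_and] at h ⊢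
          exact h.1
      have hne : e ∉ (univ.filter fun e' => tl e' = tl e ∧ idx e' < idx e) := by simp
      calc (univ.filter fun e' => tl e' = tl e ∧ idx e' < idx e).card + 1
          = (insert e (univ.filter fun e' => tl e' = tl e ∧ idx e' < idx e)).card := by
            rw [Finset.card_insert_of_notMem hne]
        _ ≤ _ := Finset.card_le_card hsub
    refine h1.trans ?_
    rw [Finset.card_filter, mdeg]
    apply Finset.sum_le_sum
    intro e' _
    by_cases h : tl e' = tl e
    · have hm : tl e ∈ ends e' := h ▸ htl e'
      rw [if_pos h]
      by_cases hloop : ends e' = Sym2.mk (tl e) (tl e)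
      · rw [if_pos hloop]; omega
      · rw [if_neg hloop, if_pos hm]
    · rw [if_neg h]
      exact Nat.zero_le _
  refine ⟨f, ?_, ?_⟩
  · intro a b hab
    by_contra hne
    rw [hfdef] at hab
    simp only [Prod.mk.injEq] at hab
    obtain ⟨htleq, hc⟩ := hab
    rw [Nat.add_right_cancel_iff] at hc
    have hidx : idx a ≠ idx b := by
      intro h
      exact hne ((Fintype.equivFin E).injective (Fin.ext h))
    rcases lt_or_gt_of_ne hidx with h | h
    · exact absurd hc (Nat.ne_of_lt (key a b htleq h))
    · exact absurd hc.symm (Nat.ne_of_lt (key b a htleq.symm h))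
  · intro e
    rw [mA, Finset.mem_filter]
    constructor
    · rw [mS, Finset.mem_biUnion]
      refine ⟨tl e, Finset.mem_univ _, ?_⟩
      rw [Finset.mem_image]
      exact ⟨(univ.filter fun e' => tl e' = tl e ∧ idx e' < idx e).card + 1,
        Finset.mem_Icc.mpr ⟨Nat.le_add_left 1 _, hcard e⟩, rfl⟩
    · exact htl e
end

section
/- Let B ⊆ S be a transversal of the set system (A(e), e ∈ E), i.e., a partial transversal with |B| = |E|. Then the complement S \ B is also a transversal of (A(e), e ∈ E). (Theorem 1(a): since |S| = 2|E|, this says that the transversal matroid TM(G) is identically self-dual: the complement of every basis is a basis.) -/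
open Finset

variable {V E : Type*}

section aux
variable [Fintype V] [Fintype E] [DecidableEq V] (ends : E → Sym2 V)

lemma deg_term (x y v : V) :
    (if s(x, y) = Sym2.mk v v then 2 else if v ∈ s(x, y) then 1 else 0)
      = (if x = v then 1 else 0) + (if y = v then 1 else 0) := by
  by_cases h1 : x = v <;> by_cases h2 : y = v <;>
    simp_all [Sym2.eq_iff, Sym2.mem_iff, eq_comm]

lemma mk_inj (v : V) : Function.Injective (fun i : ℕ => (v, i)) := by
  intro a b h; simpa using h

lemma fiber_mS (v : V) :
    (mS ends).filter (fun p => p.1 = v) = (Finset.Icc 1 (mdeg ends v)).image fun i => (v, i) := by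
  ext ⟨w, i⟩
  simp only [mS, mem_filter, mem_biUnion, mem_univ, true_and, mem_image, Prod.mk.injEq]
  aesop

lemma card_fiber_mS (v : V) : ((mS ends).filter (fun p => p.1 = v)).card = mdeg ends v := by
  rw [fiber_mS, Finset.card_image_of_injective _ (mk_inj v), Nat.card_Icc]
  omega

lemma card_mS : (mS ends).card = 2 * Fintype.card E := by
  rw [mS, Finset.card_biUnion]
  · have h1 : ∀ v : V, ((Finset.Icc 1 (mdeg ends v)).image fun i => (v, i)).card = mdeg ends v := by
      intro v
      rw [Finset.card_image_of_injective _ (mk_inj v), Nat.card_Icc]; omega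
    simp_rw [h1, mdeg]
    rw [Finset.sum_comm]
    have h2 : ∀ e : E, ∑ v : V, (if ends e = Sym2.mk v v then 2 else if v ∈ ends e then 1 else 0) = 2 := by
      intro e
      induction (ends e) using Sym2.ind with
      | _ x y =>
        simp_rw [deg_term, Finset.sum_add_distrib, Finset.sum_ite_eq, mem_univ, if_true]
    simp_rw [h2, Finset.sum_const, Finset.card_univ, smul_eq_mul, mul_comm]
  · intro x _ y _ hxy
    rw [Function.onFun, Finset.disjoint_left]
    rintro p hp hq
    obtain ⟨i, _, rfl⟩ := mem_image.1 hp
    obtain ⟨j, _, hj⟩ := mem_image.1 hq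
    exact hxy ((Prod.ext_iff.1 hj).1.symm)
end aux

/-- `TM(G)` is identically self-dual: the complement in `S` of any
transversal of `(A(e), e ∈ E)` is again a transversal. -/
theorem stmt4 [Fintype V] [Fintype E] [DecidableEq V] (ends : E → Sym2 V)
    (B : Finset (V × ℕ)) (hB : B ⊆ mS ends)
    (hPT : IsPT ends Finset.univ B) (hcard : B.card = Fintype.card E) :
    IsPT ends Finset.univ (mS ends \ B) ∧ (mS ends \ B).card = Fintype.card E := by
  classical
  obtain ⟨f, hfinj, hf⟩ := hPT
  set C := mS ends \ B with hC
  have hcardC : C.card = Fintype.card E := by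
    rw [hC, Finset.card_sdiff_of_subset hB, card_mS, hcard]; omega
  refine ⟨?_, hcardC⟩
  -- f is a bijection from B onto E
  have himg : B.image f = Finset.univ := by
    apply Finset.eq_univ_of_card
    rw [Finset.card_image_of_injOn hfinj, hcard]
  have hsur : ∀ e : E, ∃ b, b ∈ B ∧ f b = e := by
    intro e
    have : e ∈ B.image f := himg ▸ Finset.mem_univ e
    simpa [Finset.mem_image] using this
  choose finv hfinvB hfinv using hsur
  have hfinv_f : ∀ b ∈ B, finv (f b) = b := fun b hb => hfinj (hfinvB _) hb (hfinv _)
  set u : E → V := fun e => (finv e).1 with hu_def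
  have hu : ∀ e, u e ∈ ends e := by
    intro e
    have h2 := (hf _ (hfinvB e)).2
    rw [mA, Finset.mem_filter, hfinv e] at h2
    exact h2.2
  have hex : ∀ e, ∃ w, s(u e, w) = ends e := fun e => ⟨Sym2.Mem.other (hu e), Sym2.other_spec (hu e)⟩
  choose g hgspec using hex
  have hgmem : ∀ e, g e ∈ ends e := fun e => (hgspec e) ▸ Sym2.mem_mk_right _ _
  -- counting at each vertex
  have hβγ : ∀ v, (Finset.univ.filter fun e => u e = v).card
      + (Finset.univ.filter fun e => g e = v).card = mdeg ends v := by
    intro v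
    rw [Finset.card_filter, Finset.card_filter, ← Finset.sum_add_distrib, mdeg]
    apply Finset.sum_congr rfl
    intro e _
    rw [← hgspec e, deg_term]
  have hβ : ∀ v, (Finset.univ.filter fun e => u e = v).card
      = (B.filter fun p => p.1 = v).card := by
    intro v
    apply Finset.card_bij (fun e _ => finv e)
    · intro e he
      exact Finset.mem_filter.2 ⟨hfinvB e, (Finset.mem_filter.1 he).2⟩
    · intro e₁ _ e₂ _ h
      rw [← hfinv e₁, ← hfinv e₂, h]
    · intro b hb
      obtain ⟨hbB, hbv⟩ := Finset.mem_filter.1 hb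
      refine ⟨f b, Finset.mem_filter.2 ⟨Finset.mem_univ _, ?_⟩, hfinv_f b hbB⟩
      show u (f b) = v
      rw [hu_def]
      simp only [hfinv_f b hbB]
      exact hbv
  have hCfilter : ∀ v, C.filter (fun p => p.1 = v)
      = (mS ends).filter (fun p => p.1 = v) \ B.filter (fun p => p.1 = v) := by
    intro v
    ext p
    simp only [hC, Finset.mem_filter, Finset.mem_sdiff]
    tauto
  have hCfib : ∀ v, (C.filter fun p => p.1 = v).card
      = (Finset.univ.filter fun e => g e = v).card := by
    intro v
    rw [hCfilter v, Finset.card_sdiff_of_subset (Finset.filter_subset_filter _ hB), card_fiber_mS]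
    have h1 := hβγ v
    have h2 := hβ v
    have h3 : (B.filter fun p => p.1 = v).card ≤ mdeg ends v := by
      rw [← card_fiber_mS ends v]
      exact Finset.card_le_card (Finset.filter_subset_filter _ hB)
    omega
  -- build the global injection
  let eqv : ∀ v : V, {p // p ∈ C.filter fun p => p.1 = v}
      ≃ {e // e ∈ Finset.univ.filter fun e => g e = v} :=
    fun v => Finset.equivOfCardEq (hCfib v)
  refine ⟨fun p => if h : p ∈ C.filter (fun q => q.1 = p.1)
    then ((eqv p.1) ⟨p, h⟩ : E) else f p, ?_, ?_⟩
  · -- InjOn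
    rintro ⟨a, i⟩ hp ⟨b, j⟩ hq h
    have hp' : ((a, i) : V × ℕ) ∈ C := Finset.mem_coe.1 hp
    have hq' : ((b, j) : V × ℕ) ∈ C := Finset.mem_coe.1 hq
    have hpm : ((a, i) : V × ℕ) ∈ C.filter (fun q => q.1 = a) :=
      Finset.mem_filter.2 ⟨hp', rfl⟩
    have hqm : ((b, j) : V × ℕ) ∈ C.filter (fun q => q.1 = b) :=
      Finset.mem_filter.2 ⟨hq', rfl⟩
    simp only [dif_pos hpm, dif_pos hqm] at h
    have hga : g ((eqv a ⟨(a,i), hpm⟩ : E)) = a :=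
      (Finset.mem_filter.1 (eqv a ⟨(a,i), hpm⟩).2).2
    have hgb : g ((eqv b ⟨(b,j), hqm⟩ : E)) = b :=
      (Finset.mem_filter.1 (eqv b ⟨(b,j), hqm⟩).2).2
    have hab : a = b := by rw [← hga, ← hgb, h]
    subst hab
    have := (eqv a).injective (Subtype.ext h)
    exact Subtype.ext_iff.1 this
  · -- membership
    intro p hp
    have hpm : p ∈ C.filter (fun q => q.1 = p.1) := Finset.mem_filter.2 ⟨hp, rfl⟩
    simp only [dif_pos hpm]
    refine ⟨Finset.mem_univ _, ?_⟩
    have hg : g ((eqv p.1 ⟨p, hpm⟩ : E)) = p.1 :=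
      (Finset.mem_filter.1 (eqv p.1 ⟨p, hpm⟩).2).2
    refine Finset.mem_filter.2 ⟨(Finset.mem_sdiff.1 hp).1, ?_⟩
    have h2 := hgmem ((eqv p.1) ⟨p, hpm⟩ : E)
    rwa [hg] at h2
end

section
/- Let W ⊆ V and let S(W) := {(v,i) ∈ S : v ∈ W}. Then the maximum size of a partial transversal of the set system (A(e), e ∈ E) contained in S(W) equals the number of edges of G having at least one endpoint in W, i.e., |E| − |E₁| where E₁ is the set of edges with both endpoints in V \ W. (Claim r(X) = |E₂| in the proof of Theorem 1(b).) -/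
open Finset

variable {V E : Type*}

/-- the max size of a partial transversal of `(A(e), e ∈ E)` contained in
`S(W)` equals `|E| − |E₁|`, where `E₁` is the set of edges with both endpoints in `V \ W`. -/
theorem stmt5 [Fintype V] [Fintype E] [DecidableEq V] (ends : E → Sym2 V)
    (W : Finset V) (E₁ : Finset E) (hE₁ : ∀ e, e ∈ E₁ ↔ ∀ v ∈ ends e, v ∉ W) :
    sSup {k : ℕ | ∃ B ⊆ (mS ends).filter (fun p => p.1 ∈ W),
        IsPT ends Finset.univ B ∧ B.card = k} =
      Fintype.card E - E₁.card := by
  classical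
  have hub : (Fintype.card E - E₁.card) ∈ upperBounds {k : ℕ | ∃ B ⊆ (mS ends).filter (fun p => p.1 ∈ W),
        IsPT ends Finset.univ B ∧ B.card = k} := by
    rintro k ⟨B, hB, ⟨f, hfi, hf⟩, rfl⟩
    have hcard : B.card ≤ (Finset.univ \ E₁).card := by
      apply Finset.card_le_card_of_injOn f _ hfi
      intro b hb
      simp only [Finset.mem_coe, Finset.mem_sdiff, Finset.mem_univ, true_and]
      intro hfb
      have hbW : b.1 ∈ W := (Finset.mem_filter.mp (hB hb)).2
      have hb1 : b.1 ∈ ends (f b) := (Finset.mem_filter.mp (hf b hb).2).2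
      exact (hE₁ (f b)).mp hfb b.1 hb1 hbW
    simpa [Finset.card_sdiff_of_subset (Finset.subset_univ E₁), Finset.card_univ] using hcard
  refine le_antisymm (csSup_le' hub) ?_
  rcases isEmpty_or_nonempty E with hE | hE
  · rw [Fintype.card_eq_zero, Nat.zero_sub]
    exact Nat.zero_le _
  · apply le_csSup ⟨_, hub⟩
    -- construct the maximum partial transversal
    set E₂ : Finset E := Finset.univ \ E₁ with hE₂def
    have hgex : ∀ e : E, ∃ v, v ∈ ends e ∧ (e ∈ E₂ → v ∈ W) := by
      intro e
      by_cases he : e ∈ E₂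
      · simp only [hE₂def, Finset.mem_sdiff, Finset.mem_univ, true_and] at he
        by_contra h
        push_neg at h
        refine he ((hE₁ e).mpr fun v hv hvW => ?_)
        exact (h v hv).2 hvW
      · exact ⟨(ends e).out.1, Sym2.out_fst_mem _, fun h => absurd h he⟩
    choose g hg1' hg2' using hgex
    have hg1 : ∀ e, e ∈ E₂ → g e ∈ ends e := fun e _ => hg1' e
    have hg2 : ∀ e, e ∈ E₂ → g e ∈ W := fun e he => hg2' e he
    obtain σ := Fintype.equivFin E
    set idx : E → ℕ := fun e => 1 + (E₂.filter fun e' => g e' = g e ∧ σ e' < σ e).card with hidx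
    have key : ∀ a b, a ∈ E₂ → b ∈ E₂ → g a = g b → σ a < σ b →
        (E₂.filter fun e' => g e' = g a ∧ σ e' < σ a).card <
        (E₂.filter fun e' => g e' = g b ∧ σ e' < σ b).card := by
      intro a b ha hb hgab hσ
      apply Finset.card_lt_card
      constructor
      · intro x hx
        obtain ⟨hx1, hx2, hx3⟩ := Finset.mem_filter.mp hx
        exact Finset.mem_filter.mpr ⟨hx1, hgab ▸ hx2, hx3.trans hσ⟩
      · intro hsub
        have := hsub (Finset.mem_filter.mpr ⟨ha, hgab, hσ⟩)
        exact absurd (Finset.mem_filter.mp this).2.2 (lt_irrefl _)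
    -- fiber bound
    have hfib : ∀ v, (E₂.filter fun e' => g e' = v).card ≤ mdeg ends v := by
      intro v
      calc (E₂.filter fun e' => g e' = v).card
          = ∑ e ∈ E₂.filter fun e' => g e' = v, 1 := by simp
        _ ≤ ∑ e ∈ E₂.filter fun e' => g e' = v,
              (if ends e = Sym2.mk v v then 2 else if v ∈ ends e then 1 else 0) := by
            apply Finset.sum_le_sum
            intro e he
            obtain ⟨heE₂, hgv⟩ := Finset.mem_filter.mp he
            have hv : v ∈ ends e := hgv ▸ hg1 e heE₂
            split <;> simp [hv]
        _ ≤ mdeg ends v := Finset.sum_le_sum_of_subset (Finset.subset_univ _)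
    have hidxle : ∀ e ∈ E₂, idx e ≤ mdeg ends (g e) := by
      intro e he
      have hss : (E₂.filter fun e' => g e' = g e ∧ σ e' < σ e) ⊂
          (E₂.filter fun e' => g e' = g e) := by
        constructor
        · intro x hx
          obtain ⟨hx1, hx2, -⟩ := Finset.mem_filter.mp hx
          exact Finset.mem_filter.mpr ⟨hx1, hx2⟩
        · intro hsub
          have := hsub (Finset.mem_filter.mpr ⟨he, rfl⟩)
          exact absurd (Finset.mem_filter.mp this).2.2 (lt_irrefl _)
      have h1 := Finset.card_lt_card hss
      have h2 := hfib (g e)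
      simp only [hidx]
      omega
    -- key membership fact
    have hmem : ∀ e ∈ E₂, (g e, idx e) ∈ (mS ends).filter (fun p => p.1 ∈ W) := by
      intro e he
      refine Finset.mem_filter.mpr ⟨?_, hg2 e he⟩
      refine Finset.mem_biUnion.mpr ⟨g e, Finset.mem_univ _, ?_⟩
      refine Finset.mem_image.mpr ⟨idx e, ?_, rfl⟩
      refine Finset.mem_Icc.mpr ⟨by simp [hidx], hidxle e he⟩
    -- injectivity on E₂
    have hinj : Set.InjOn (fun e => (g e, idx e)) ↑E₂ := by
      intro a ha' b hb' hab
      have ha : a ∈ E₂ := ha'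
      have hb : b ∈ E₂ := hb'
      by_contra hne
      obtain ⟨hgab, hiab⟩ := Prod.mk.inj hab
      simp only [hidx] at hiab
      have hσ : σ a ≠ σ b := fun h => hne (σ.injective h)
      rcases lt_or_gt_of_ne hσ with h | h
      · have := key a b ha hb hgab h
        omega
      · have := key b a hb ha hgab.symm h
        omega
    refine ⟨E₂.image fun e => (g e, idx e), ?_, ?_, ?_⟩
    · intro p hp
      obtain ⟨e, he, rfl⟩ := Finset.mem_image.mp hp
      exact hmem e he
    · -- IsPT
      have hne : Nonempty E := hE
      set f : V × ℕ → E := fun p =>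
        if h : ∃ e, e ∈ E₂ ∧ (g e, idx e) = p then h.choose else hne.some with hf
      have hfspec : ∀ e ∈ E₂, f (g e, idx e) ∈ E₂ ∧
          (g (f (g e, idx e)), idx (f (g e, idx e))) = (g e, idx e) := by
        intro e he
        have h : ∃ e', e' ∈ E₂ ∧ (g e', idx e') = (g e, idx e) := ⟨e, he, rfl⟩
        simp only [hf, dif_pos h]
        exact ⟨h.choose_spec.1, h.choose_spec.2⟩
      refine ⟨f, ?_, ?_⟩
      · intro a ha b hb hab
        obtain ⟨ea, hea, rfl⟩ := Finset.mem_image.mp (by simpa using ha)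
        obtain ⟨eb, heb, rfl⟩ := Finset.mem_image.mp (by simpa using hb)
        have h1 := hfspec ea hea
        have h2 := hfspec eb heb
        rw [← h1.2, ← h2.2, hab]
      · intro b hb
        obtain ⟨e, he, rfl⟩ := Finset.mem_image.mp hb
        have h1 := hfspec e he
        refine ⟨Finset.mem_univ _, ?_⟩
        refine Finset.mem_filter.mpr ⟨(Finset.mem_filter.mp (hmem e he)).1, ?_⟩
        have hgeq : g (f (g e, idx e)) = g e := (Prod.mk.inj h1.2).1
        show (g e, idx e).1 ∈ ends (f (g e, idx e))
        have hmem2 : g (f (g e, idx e)) ∈ ends (f (g e, idx e)) := hg1 _ h1.1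
        rwa [hgeq] at hmem2
    · rw [Finset.card_image_of_injOn hinj, hE₂def,
        Finset.card_sdiff_of_subset (Finset.subset_univ E₁), Finset.card_univ]
end

section
/- Let W ⊆ V, let E₁ ⊆ E be the set of edges with both endpoints in V \ W, and let S(W) := {(v,i) ∈ S : v ∈ W}. For a set B ⊆ S \ S(W) with |B| = |E₁|, the following are equivalent: (i) B is a transversal of the set system 𝒜' = (A(e), e ∈ E₁); (ii) there exists a set B_X ⊆ S(W) such that B ∪ B_X is a transversal of the full system (A(e), e ∈ E). (Lemma 2.1: the contraction TM(G)/S(W) equals the transversal matroid M[𝒜'], stated via the basis characterization of contraction.) -/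
open Finset

variable {V E : Type*}

lemma mem_mS' [Fintype V] [Fintype E] [DecidableEq V] (ends : E → Sym2 V) (v : V) (i : ℕ) :
    (v, i) ∈ mS ends ↔ 1 ≤ i ∧ i ≤ mdeg ends v := by
  simp only [mS, Finset.mem_biUnion, Finset.mem_univ, Finset.mem_image, Finset.mem_Icc,
    true_and, Prod.mk.injEq]
  constructor
  · rintro ⟨a, b, hb, rfl, rfl⟩; exact hb
  · rintro ⟨h1, h2⟩; exact ⟨v, i, ⟨h1, h2⟩, rfl, rfl⟩

lemma card_incident_le_mdeg [Fintype E] [DecidableEq V] (ends : E → Sym2 V) (v : V) :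
    (Finset.univ.filter fun e => v ∈ ends e).card ≤ mdeg ends v := by
  rw [mdeg, Finset.card_filter]
  apply Finset.sum_le_sum
  intro e _
  by_cases h : v ∈ ends e
  · by_cases h2 : ends e = Sym2.mk v v <;> simp [h, h2]
  · have h2 : ends e ≠ Sym2.mk v v := by
      intro hc; exact h (hc ▸ (by simp : v ∈ Sym2.mk v v))
    simp [h, h2]

/-- Lemma 2.1: for `B ⊆ S \ S(W)` with `|B| = |E₁|`, `B` is a transversal of
`𝒜' = (A(e), e ∈ E₁)` iff there is `B_X ⊆ S(W)` with `B ∪ B_X` a transversal of the full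
system `(A(e), e ∈ E)`. -/
theorem stmt6 [Fintype V] [Fintype E] [DecidableEq V] (ends : E → Sym2 V)
    (W : Finset V) (E₁ : Finset E) (hE₁ : ∀ e, e ∈ E₁ ↔ ∀ v ∈ ends e, v ∉ W)
    (B : Finset (V × ℕ)) (hB : B ⊆ mS ends \ (mS ends).filter (fun p => p.1 ∈ W))
    (hcard : B.card = E₁.card) :
    (IsPT ends E₁ B ∧ B.card = E₁.card) ↔
      ∃ BX ⊆ (mS ends).filter (fun p => p.1 ∈ W),
        IsPT ends Finset.univ (B ∪ BX) ∧ (B ∪ BX).card = Fintype.card E := by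
  classical
  have hBW : ∀ b ∈ B, b.1 ∉ W := by
    intro b hb
    have := hB hb
    rw [Finset.mem_sdiff, Finset.mem_filter] at this
    exact fun hw => this.2 ⟨this.1, hw⟩
  constructor
  · rintro ⟨⟨f, hfinj, hf⟩, -⟩
    set w : E → V := fun e =>
      if h : ∃ v, v ∈ ends e ∧ v ∈ W then h.choose else (Quot.out (ends e)).1 with hw
    have hwmem : ∀ e ∉ E₁, w e ∈ ends e ∧ w e ∈ W := by
      intro e he
      have hex : ∃ v, v ∈ ends e ∧ v ∈ W := by
        by_contra hc
        push_neg at hc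
        exact he ((hE₁ e).2 fun v hv => hc v hv)
      simp only [hw, dif_pos hex]
      exact hex.choose_spec
    set ord : E → ℕ := fun e => (Fintype.equivFin E e : ℕ) with hord
    have hordinj : Function.Injective ord := fun a b h =>
      (Fintype.equivFin E).injective (Fin.val_injective h)
    set idx : E → ℕ := fun e =>
      (Finset.univ.filter fun e' => e' ∉ E₁ ∧ w e' = w e ∧ ord e' ≤ ord e).card with hidx
    set g : E → V × ℕ := fun e => (w e, idx e) with hg
    have hidx1 : ∀ e ∉ E₁, 1 ≤ idx e := by
      intro e he
      have : e ∈ Finset.univ.filter fun e' => e' ∉ E₁ ∧ w e' = w e ∧ ord e' ≤ ord e := by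
        simp [he]
      simpa [hidx] using Finset.card_pos.2 ⟨e, this⟩
    have hidx2 : ∀ e ∉ E₁, idx e ≤ mdeg ends (w e) := by
      intro e he
      refine le_trans (Finset.card_le_card ?_) (card_incident_le_mdeg ends (w e))
      intro e' he'
      simp only [Finset.mem_filter, Finset.mem_univ, true_and] at he' ⊢
      exact he'.2.1 ▸ (hwmem e' he'.1).1
    have hgS : ∀ e ∉ E₁, g e ∈ (mS ends).filter fun p => p.1 ∈ W := by
      intro e he
      rw [Finset.mem_filter]
      exact ⟨(mem_mS' ends _ _).2 ⟨hidx1 e he, hidx2 e he⟩, (hwmem e he).2⟩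
    have hginj : ∀ e ∉ E₁, ∀ e' ∉ E₁, g e = g e' → e = e' := by
      intro e he e' he' heq
      have hw' : w e = w e' := congrArg Prod.fst heq
      have hi' : idx e = idx e' := congrArg Prod.snd heq
      rcases lt_trichotomy (ord e) (ord e') with h | h | h
      · exfalso
        have hss : (Finset.univ.filter fun a => a ∉ E₁ ∧ w a = w e ∧ ord a ≤ ord e) ⊂
            (Finset.univ.filter fun a => a ∉ E₁ ∧ w a = w e' ∧ ord a ≤ ord e') := by
          constructor
          · intro a ha
            simp only [Finset.mem_filter, Finset.mem_univ, true_and] at ha ⊢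
            exact ⟨ha.1, hw' ▸ ha.2.1, le_trans ha.2.2 (le_of_lt h)⟩
          · intro hsub
            have : e' ∈ Finset.univ.filter fun a => a ∉ E₁ ∧ w a = w e ∧ ord a ≤ ord e :=
              hsub (by simp [he'])
            simp only [Finset.mem_filter, Finset.mem_univ, true_and] at this
            exact absurd this.2.2 (not_le.2 h)
        exact absurd hi' (Nat.ne_of_lt (Finset.card_lt_card hss))
      · exact hordinj h
      · exfalso
        have hss : (Finset.univ.filter fun a => a ∉ E₁ ∧ w a = w e' ∧ ord a ≤ ord e') ⊂
            (Finset.univ.filter fun a => a ∉ E₁ ∧ w a = w e ∧ ord a ≤ ord e) := by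
          constructor
          · intro a ha
            simp only [Finset.mem_filter, Finset.mem_univ, true_and] at ha ⊢
            exact ⟨ha.1, hw' ▸ ha.2.1, le_trans ha.2.2 (le_of_lt h)⟩
          · intro hsub
            have : e ∈ Finset.univ.filter fun a => a ∉ E₁ ∧ w a = w e' ∧ ord a ≤ ord e' :=
              hsub (by simp [he])
            simp only [Finset.mem_filter, Finset.mem_univ, true_and] at this
            exact absurd this.2.2 (not_le.2 h)
        exact absurd hi'.symm (Nat.ne_of_lt (Finset.card_lt_card hss))
    set BX : Finset (V × ℕ) := E₁ᶜ.image g with hBX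
    have hBXsub : BX ⊆ (mS ends).filter fun p => p.1 ∈ W := by
      intro p hp
      rw [hBX, Finset.mem_image] at hp
      obtain ⟨e, he, rfl⟩ := hp
      exact hgS e (Finset.mem_compl.1 he)
    have hdisj : Disjoint B BX := by
      rw [Finset.disjoint_left]
      intro p hpB hpX
      exact hBW p hpB ((Finset.mem_filter.1 (hBXsub hpX)).2)
    have hBXcard : BX.card = E₁ᶜ.card := by
      rw [hBX]
      apply Finset.card_image_of_injOn
      intro a ha b hb hab
      exact hginj a (Finset.mem_compl.1 ha) b (Finset.mem_compl.1 hb) hab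
    set f' : V × ℕ → E := fun p =>
      if h : ∃ e, e ∉ E₁ ∧ g e = p then h.choose else f p with hf'
    have hnotB : ∀ b ∈ B, ¬ ∃ e, e ∉ E₁ ∧ g e = b := by
      rintro b hb ⟨e, he, rfl⟩
      exact hBW _ hb ((Finset.mem_filter.1 (hgS e he)).2)
    have hf'B : ∀ b ∈ B, f' b = f b := by
      intro b hb
      simp only [hf', dif_neg (hnotB b hb)]
    have hf'BX : ∀ p ∈ BX, f' p ∉ E₁ ∧ g (f' p) = p := by
      intro p hp
      rw [hBX, Finset.mem_image] at hp
      obtain ⟨e, he, rfl⟩ := hp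
      have hex : ∃ a, a ∉ E₁ ∧ g a = g e := ⟨e, Finset.mem_compl.1 he, rfl⟩
      simp only [hf', dif_pos hex]
      exact hex.choose_spec
    refine ⟨BX, hBXsub, ⟨f', ?_, ?_⟩, ?_⟩
    · intro p hp q hq heq
      simp only [Finset.coe_union, Set.mem_union, Finset.mem_coe] at hp hq
      rcases hp with hp | hp <;> rcases hq with hq | hq
      · exact hfinj hp hq (by rwa [hf'B p hp, hf'B q hq] at heq)
      · exact absurd ((hf'BX q hq).1) (by rw [← heq, hf'B p hp]; exact fun h => h (hf p hp).1)
      · exact absurd ((hf'BX p hp).1) (by rw [heq, hf'B q hq]; exact fun h => h (hf q hq).1)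
      · rw [← (hf'BX p hp).2, ← (hf'BX q hq).2, heq]
    · intro b hb
      rcases Finset.mem_union.1 hb with hb | hb
      · rw [hf'B b hb]
        exact ⟨Finset.mem_univ _, (hf b hb).2⟩
      · obtain ⟨hne, hgb⟩ := hf'BX b hb
        refine ⟨Finset.mem_univ _, ?_⟩
        rw [mA, Finset.mem_filter]
        generalize hE0 : f' b = e₀ at hgb hne ⊢
        subst hgb
        exact ⟨(Finset.mem_filter.1 (hgS _ hne)).1, (hwmem _ hne).1⟩
    · rw [Finset.card_union_of_disjoint hdisj, hcard, hBXcard,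
        Finset.card_add_card_compl]
  · rintro ⟨BX, hBXsub, ⟨f, hfinj, hf⟩, hcardU⟩
    have hdisj : Disjoint B BX := by
      rw [Finset.disjoint_left]
      intro p hpB hpX
      exact hBW p hpB ((Finset.mem_filter.1 (hBXsub hpX)).2)
    have hBXcard : BX.card = E₁ᶜ.card := by
      have h1 : B.card + BX.card = Fintype.card E := by
        rw [← Finset.card_union_of_disjoint hdisj, hcardU]
      have h2 := Finset.card_add_card_compl E₁
      omega
    have hfBX : ∀ b ∈ BX, f b ∉ E₁ := by
      intro b hb hE
      have hbW : b.1 ∈ W := (Finset.mem_filter.1 (hBXsub hb)).2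
      have hbA := (hf b (Finset.mem_union_right B hb)).2
      rw [mA, Finset.mem_filter] at hbA
      exact (hE₁ (f b)).1 hE b.1 hbA.2 hbW
    have himg : BX.image f = E₁ᶜ := by
      apply Finset.eq_of_subset_of_card_le
      · intro e he
        obtain ⟨b, hb, rfl⟩ := Finset.mem_image.1 he
        exact Finset.mem_compl.2 (hfBX b hb)
      · have hmono : Set.InjOn f ↑BX := hfinj.mono fun x hx =>
          Finset.mem_coe.2 (Finset.mem_union_right B hx)
        rw [Finset.card_image_of_injOn hmono, hBXcard]
    have hmonoB : Set.InjOn f ↑B := hfinj.mono fun x hx =>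
      Finset.mem_coe.2 (Finset.mem_union_left BX hx)
    refine ⟨⟨f, hmonoB, ?_⟩, hcard⟩
    intro b hb
    refine ⟨?_, (hf b (Finset.mem_union_left BX hb)).2⟩
    by_contra hne
    have : f b ∈ BX.image f := himg ▸ Finset.mem_compl.2 hne
    obtain ⟨b', hb', heq⟩ := Finset.mem_image.1 this
    have := hfinj (Finset.mem_coe.2 (Finset.mem_union_right B hb'))
      (Finset.mem_coe.2 (Finset.mem_union_left BX hb)) heq
    exact Finset.disjoint_left.1 hdisj hb (this ▸ hb')
end

section
/- Let W ⊆ V and let E₁ ⊆ E be the set of edges with both endpoints in V \ W. If B is a transversal of the set system 𝒜' = (A(e), e ∈ E₁), then there exists an orientation 𝒪 of G[V\W] such that for every v ∈ V \ W, the number of indices i with (v,i) ∈ B equals deg⁺_𝒪(v). (Claim in the proof of Theorem 2: every basis of M[𝒜'] is an 𝒪-basis for some orientation 𝒪.) -/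
open Finset

variable {V E : Type*}

/-- every transversal `B` of `𝒜' = (A(e), e ∈ E₁)` arises from an orientation:
there is a tail map `𝒪` of `G[V\W]` such that, for each `v ∈ V \ W`, the number of indices
`i` with `(v,i) ∈ B` equals `deg⁺_𝒪(v)`. -/
theorem stmt9 [Fintype V] [Fintype E] [DecidableEq V] (ends : E → Sym2 V)
    (W : Finset V) (E₁ : Finset E) (hE₁ : ∀ e, e ∈ E₁ ↔ ∀ v ∈ ends e, v ∉ W)
    (B : Finset (V × ℕ)) (hPT : IsPT ends E₁ B) (hcard : B.card = E₁.card) :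
    ∃ tail : E → V, (∀ e ∈ E₁, tail e ∈ ends e) ∧
      ∀ v ∉ W, alphaVec B v = (E₁.filter fun e => tail e = v).card := by
  classical
  obtain ⟨f, hinj, hf⟩ := hPT
  have himg : B.image f = E₁ := by
    apply Finset.eq_of_subset_of_card_le
    · intro e he
      obtain ⟨b, hb, rfl⟩ := Finset.mem_image.mp he
      exact (hf b hb).1
    · rw [Finset.card_image_of_injOn hinj, hcard]
  set tail : E → V := fun e =>
    if h : ∃ b ∈ B, f b = e then h.choose.1 else (Quot.out (ends e)).1 with htail
  have htb : ∀ b ∈ B, tail (f b) = b.1 := by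
    intro b hb
    have h : ∃ b' ∈ B, f b' = f b := ⟨b, hb, rfl⟩
    have := h.choose_spec
    have hb' : h.choose = b := hinj this.1 hb this.2
    show tail (f b) = b.1
    rw [htail]
    simp only []
    rw [dif_pos h, hb']
  have hmem : ∀ b ∈ B, b.1 ∈ ends (f b) := by
    intro b hb
    have := (hf b hb).2
    rw [mA, Finset.mem_filter] at this
    exact this.2
  refine ⟨tail, ?_, ?_⟩
  · intro e he
    rw [← himg] at he
    obtain ⟨b, hb, rfl⟩ := Finset.mem_image.mp he
    rw [htb b hb]
    exact hmem b hb
  · intro v _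
    have : E₁.filter (fun e => tail e = v)
        = (B.filter fun b => b.1 = v).image f := by
      rw [← himg]
      rw [Finset.filter_image]
      congr 1
      apply Finset.filter_congr
      intro b hb
      simp [htb b hb]
    rw [alphaVec, this, Finset.card_image_of_injOn
      (hinj.mono (Finset.coe_subset.mpr (Finset.filter_subset _ _)))]
end
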